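/- Setup as before: A bounded J-self-adjoint on K, Γ₀⁺Γ₀ boundedly invertible, P := Γ₀(Γ₀⁺Γ₀)⁻¹Γ₀⁺, Ã := (I−P)A(I−P). Fix z₀ with A−z₀ invertible and Ã−z₀ invertible on (I−P)K, and define R := (A−z₀)⁻¹(I + PA(I−P)(Ã−z₀)⁻¹)(I−P). Then ker R = range P; in particular, every vector of range Γ₀ lies in ker R, and conversely if R((I−P)y) = 0 then (I−P)y = 0. -/

import Mathlib

open scoped InnerProductSpace

/-- Corollary 2: for `R = (A−z₀)⁻¹(I + PA(I−P)(Ã−z₀)⁻¹)(I−P)` one has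
`ker R = range P`; in particular every vector of `range Γ₀` lies in `ker R`, and
`R((I−P)y) = 0` forces `(I−P)y = 0`. -/
theorem resolvent_of_inverse_kernel
    {K H : Type*} [NormedAddCommGroup K] [InnerProductSpace ℂ K] [CompleteSpace K]
    [NormedAddCommGroup H] [InnerProductSpace ℂ H] [CompleteSpace H]
    (J : K →L[ℂ] K) (hJsa : IsSelfAdjoint J) (hJ2 : J ∘L J = 1)
    (A : K →L[ℂ] K) (hA : J ∘L A = (ContinuousLinearMap.adjoint A) ∘L J)
    (Γ₀ : H →L[ℂ] K)
    (Γplus : K →L[ℂ] H) (hΓplus : Γplus = (ContinuousLinearMap.adjoint Γ₀) ∘L J)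
    (S : H →L[ℂ] H) (hS1 : S ∘L (Γplus ∘L Γ₀) = 1) (hS2 : (Γplus ∘L Γ₀) ∘L S = 1)
    (P : K →L[ℂ] K) (hP : P = Γ₀ ∘L S ∘L Γplus)
    (z₀ : ℂ)
    (RA : K →L[ℂ] K) (hRA1 : RA ∘L (A - z₀ • 1) = 1) (hRA2 : (A - z₀ • 1) ∘L RA = 1)
    (B : K →L[ℂ] K) (hB1 : B ∘L (1 - P) = B) (hB2 : (1 - P) ∘L B = B)
    (hB3 : B ∘L ((1 - P) ∘L A ∘L (1 - P) - z₀ • (1 - P)) = 1 - P)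
    (hB4 : ((1 - P) ∘L A ∘L (1 - P) - z₀ • (1 - P)) ∘L B = 1 - P)
    (R : K →L[ℂ] K)
    (hR : R = RA ∘L (1 + P ∘L A ∘L (1 - P) ∘L B) ∘L (1 - P)) :
    LinearMap.ker (R : K →ₗ[ℂ] K) = LinearMap.range (P : K →ₗ[ℂ] K) ∧
    (∀ h : H, R (Γ₀ h) = 0) ∧
    (∀ y : K, R ((1 - P) y) = 0 → (1 - P) y = 0) := by
  have hsub : ∀ w : K, (1 - P) w = w - P w := fun w => by
    simp [ContinuousLinearMap.sub_apply]
  have hPP : ∀ x, P (P x) = P x := by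
    intro x
    have h := ContinuousLinearMap.ext_iff.mp hS1 (S (Γplus x))
    simp only [hP, ContinuousLinearMap.comp_apply, ContinuousLinearMap.one_apply] at h ⊢
    rw [h]
  have hu : ∀ w : K, P ((1 - P) w) = 0 := by
    intro w
    rw [hsub, map_sub, hPP, sub_self]
  have h1P : ∀ x, (1 - P) (P x) = 0 := by
    intro x
    rw [hsub, hPP, sub_self]
  have h11 : ∀ w : K, (1 - P) ((1 - P) w) = (1 - P) w := by
    intro w
    rw [hsub ((1 - P) w), hu, sub_zero]
  have hRP : ∀ x, R (P x) = 0 := by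
    intro x
    rw [hR, ContinuousLinearMap.comp_apply, ContinuousLinearMap.comp_apply, h1P x,
      map_zero, map_zero]
  have hker : ∀ x, R x = 0 → (1 - P) x = 0 := by
    intro x hx
    have h2 := congrArg (fun f : K →L[ℂ] K => f (((1 + P ∘L A ∘L (1 - P) ∘L B) ∘L (1 - P)) x)) hRA2
    simp only [ContinuousLinearMap.comp_apply, ContinuousLinearMap.one_apply] at h2
    have h3 : (A - z₀ • 1) (R x) = (1 + P ∘L A ∘L (1 - P) ∘L B) ((1 - P) x) := by
      rw [hR, ContinuousLinearMap.comp_apply]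
      exact h2
    rw [hx, map_zero] at h3
    have key : (1 - P) x + P (A ((1 - P) (B ((1 - P) x)))) = 0 := by
      have := h3.symm
      simpa only [ContinuousLinearMap.add_apply, ContinuousLinearMap.one_apply,
        ContinuousLinearMap.comp_apply] using this
    have h7 : P (A ((1 - P) (B ((1 - P) x)))) = 0 := by
      have h8 := congrArg P key
      simp only [map_add, hu, zero_add, map_zero, hPP] at h8
      exact h8
    rw [h7, add_zero] at key
    exact key
  have hPΓ : ∀ h : H, P (Γ₀ h) = Γ₀ h := by
    intro h
    have h1 := ContinuousLinearMap.ext_iff.mp hS1 h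
    simp only [hP, ContinuousLinearMap.comp_apply, ContinuousLinearMap.one_apply] at h1 ⊢
    rw [h1]
  refine ⟨?_, ?_, ?_⟩
  · ext x
    constructor
    · intro hx
      have h0 := hker x hx
      rw [hsub] at h0
      exact ⟨x, (sub_eq_zero.mp h0).symm⟩
    · rintro ⟨y, rfl⟩
      exact hRP y
  · intro h
    rw [← hPΓ h]
    exact hRP (Γ₀ h)
  · intro y hy
    have h0 := hker _ hy
    rw [h11] at h0
    exact h0
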